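/- arXiv:1808.06959 — 4 statements merged into one kernel-verified Lean document; each statement's English description precedes it below -/
import Mathlib

section
/- Riemann sum convergence to the hard edge plasma function: for every x ∈ ℝ and every ℓ > 0, lim_{n→∞} (ℓ/√n) Σ_{k=1}^{⌊√n · log n⌋} γ(2x + kℓ/√n) / φ(−kℓ/√n) = H(2x). -/
open Real Filter
open MeasureTheory Set Topology

/-- The Gaussian kernel `γ(s) = (1/√(2π)) e^{-s²/2}`. -/
noncomputable def gaussKernel (s : ℝ) : ℝ :=
  (Real.sqrt (2 * Real.pi))⁻¹ * Real.exp (-s ^ 2 / 2)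

/-- The free boundary function `φ(t) = (1/√(2π)) ∫_t^∞ e^{-s²/2} ds`. -/
noncomputable def freeBoundary (t : ℝ) : ℝ :=
  (Real.sqrt (2 * Real.pi))⁻¹ * ∫ s in Set.Ioi t, Real.exp (-s ^ 2 / 2)

lemma gauss0_eq : (fun s : ℝ => Real.exp (-s ^ 2 / 2)) = fun s => Real.exp (-(1/2) * s ^ 2) := by
  funext s; ring_nf

lemma integrable_gauss0 : Integrable (fun s : ℝ => Real.exp (-s ^ 2 / 2)) := by
  rw [gauss0_eq]; exact integrable_exp_neg_mul_sq (by norm_num)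

lemma integral_gauss0 : ∫ s : ℝ, Real.exp (-s ^ 2 / 2) = Real.sqrt (2 * Real.pi) := by
  rw [gauss0_eq, integral_gaussian]
  norm_num [div_div_eq_mul_div, mul_comm]

lemma integral_gauss0_Ioi :
    ∫ s in Set.Ioi (0:ℝ), Real.exp (-s ^ 2 / 2) = Real.sqrt (2 * Real.pi) / 2 := by
  have := congrFun gauss0_eq
  simp only [this]
  rw [integral_gaussian_Ioi]
  norm_num [div_div_eq_mul_div, mul_comm]

lemma sqrt2pi_pos : 0 < Real.sqrt (2 * Real.pi) :=
  Real.sqrt_pos.2 (by positivity)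

lemma gaussKernel_pos (s : ℝ) : 0 < gaussKernel s := by
  unfold gaussKernel; positivity

lemma freeBoundary_pos (t : ℝ) : 0 < freeBoundary t := by
  unfold freeBoundary
  apply mul_pos (by positivity)
  rw [setIntegral_pos_iff_support_of_nonneg_ae]
  · have : Function.support (fun s : ℝ => Real.exp (-s ^ 2 / 2)) = Set.univ := by
      ext s; simp [Real.exp_ne_zero]
    rw [this, Set.univ_inter, Real.volume_Ioi]
    simp
  · filter_upwards with s using (Real.exp_pos _).le
  · exact integrable_gauss0.integrableOn

lemma freeBoundary_anti : Antitone freeBoundary := by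
  intro a b hab
  unfold freeBoundary
  apply mul_le_mul_of_nonneg_left _ (by positivity)
  apply setIntegral_mono_set integrable_gauss0.integrableOn
  · filter_upwards with s using (Real.exp_pos _).le
  · exact (Set.Ioi_subset_Ioi hab).eventuallyLE

lemma freeBoundary_le_one (t : ℝ) : freeBoundary t ≤ 1 := by
  unfold freeBoundary
  have h : ∫ s in Set.Ioi t, Real.exp (-s ^ 2 / 2) ≤ Real.sqrt (2 * Real.pi) := by
    rw [← integral_gauss0]
    exact setIntegral_le_integral integrable_gauss0
      (by filter_upwards with s using (Real.exp_pos _).le)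
  calc (Real.sqrt (2 * Real.pi))⁻¹ * ∫ s in Set.Ioi t, Real.exp (-s ^ 2 / 2)
      ≤ (Real.sqrt (2 * Real.pi))⁻¹ * Real.sqrt (2 * Real.pi) :=
        mul_le_mul_of_nonneg_left h (by positivity)
    _ = 1 := inv_mul_cancel₀ sqrt2pi_pos.ne'

lemma freeBoundary_zero : freeBoundary 0 = 1/2 := by
  unfold freeBoundary
  rw [integral_gauss0_Ioi]
  field_simp

lemma freeBoundary_half (t : ℝ) (ht : 0 ≤ t) : 1/2 ≤ freeBoundary (-t) := by
  rw [← freeBoundary_zero]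
  exact freeBoundary_anti (by linarith)

lemma freeBoundary_continuous : Continuous freeBoundary := by
  have h : ∀ t : ℝ, freeBoundary t = (Real.sqrt (2 * Real.pi))⁻¹ *
      (Real.sqrt (2 * Real.pi) - ((∫ s in Set.Iic (0:ℝ), Real.exp (-s ^ 2 / 2))
        + ∫ s in (0:ℝ)..t, Real.exp (-s ^ 2 / 2))) := by
    intro t
    unfold freeBoundary
    congr 1
    have hsplit := integral_add_compl (measurableSet_Iic (a := t)) integrable_gauss0
    rw [Set.compl_Iic] at hsplit
    have hIic : ∫ s in Set.Iic t, Real.exp (-s ^ 2 / 2)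
        = (∫ s in Set.Iic (0:ℝ), Real.exp (-s ^ 2 / 2)) + ∫ s in (0:ℝ)..t, Real.exp (-s ^ 2 / 2) := by
      rw [← intervalIntegral.integral_Iic_sub_Iic integrable_gauss0.integrableOn
        integrable_gauss0.integrableOn]
      ring
    rw [← integral_gauss0, ← hsplit, hIic]
    ring
  simp only [funext h]
  exact continuous_const.mul (continuous_const.sub (continuous_const.add
    (intervalIntegral.continuous_primitive (fun a b => integrable_gauss0.intervalIntegrable) 0)))

noncomputable def domFn (x : ℝ) (t : ℝ) : ℝ :=
  2 * (Real.sqrt (2 * Real.pi))⁻¹ * Real.exp (-(x + t) ^ 2 / 2 + |x + t|)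

lemma integrable_gaussShift (a : ℝ) : Integrable (fun t : ℝ => Real.exp (-(t + a) ^ 2 / 2)) := by
  have h := (measurePreserving_add_right (volume : Measure ℝ) a).integrable_comp
    integrable_gauss0.aestronglyMeasurable
  exact h.mpr integrable_gauss0

lemma domFn_integrable (x : ℝ) : Integrable (domFn x) := by
  set C : ℝ := 2 * (Real.sqrt (2 * Real.pi))⁻¹ * Real.exp (1/2) with hC
  have hB : Integrable (fun t : ℝ =>
      C * (Real.exp (-(t + (x - 1)) ^ 2 / 2) + Real.exp (-(t + (x + 1)) ^ 2 / 2))) :=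
    ((integrable_gaussShift (x - 1)).add (integrable_gaussShift (x + 1))).const_mul C
  apply Integrable.mono' hB
  · apply Continuous.aestronglyMeasurable
    unfold domFn
    exact continuous_const.mul (Real.continuous_exp.comp (by fun_prop))
  · filter_upwards with t
    rw [Real.norm_eq_abs, abs_of_nonneg (by unfold domFn; positivity)]
    have e1 : 0 ≤ Real.exp (-(t + (x - 1)) ^ 2 / 2) := (Real.exp_pos _).le
    have e2 : 0 ≤ Real.exp (-(t + (x + 1)) ^ 2 / 2) := (Real.exp_pos _).le
    rcases abs_cases (x + t) with ⟨h, _⟩ | ⟨h, _⟩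
    · have : domFn x t = C * Real.exp (-(t + (x - 1)) ^ 2 / 2) := by
        unfold domFn
        have he : Real.exp (-(x + t) ^ 2 / 2 + (x + t))
            = Real.exp (1/2) * Real.exp (-(t + (x - 1)) ^ 2 / 2) := by
          rw [← Real.exp_add]; congr 1; ring
        rw [h, he, hC]; ring
      rw [this]
      have hCpos : 0 ≤ C := by positivity
      nlinarith
    · have : domFn x t = C * Real.exp (-(t + (x + 1)) ^ 2 / 2) := by
        unfold domFn
        have he : Real.exp (-(x + t) ^ 2 / 2 + -(x + t))
            = Real.exp (1/2) * Real.exp (-(t + (x + 1)) ^ 2 / 2) := by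
          rw [← Real.exp_add]; congr 1; ring
        rw [h, he, hC]; ring
      rw [this]
      have hCpos : 0 ≤ C := by positivity
      nlinarith

lemma f_nonneg (x t : ℝ) : 0 ≤ gaussKernel (x + t) / freeBoundary (-t) :=
  div_nonneg (gaussKernel_pos _).le (freeBoundary_pos _).le

lemma f_le_domFn (x t s : ℝ) (h0 : 0 ≤ s) (hts : t ≤ s) (hs1 : s ≤ t + 1) :
    gaussKernel (x + s) / freeBoundary (-s) ≤ domFn x t := by
  have step1 : gaussKernel (x + s) / freeBoundary (-s) ≤ 2 * gaussKernel (x + s) := by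
    rw [div_le_iff₀ (freeBoundary_pos _)]
    nlinarith [freeBoundary_half s h0, (gaussKernel_pos (x + s)).le]
  refine step1.trans ?_
  have hexp : Real.exp (-(x + s) ^ 2 / 2) ≤ Real.exp (-(x + t) ^ 2 / 2 + |x + t|) := by
    rw [Real.exp_le_exp]
    nlinarith [abs_nonneg (x + t), neg_abs_le (x + t), le_abs_self (x + t)]
  calc 2 * gaussKernel (x + s)
      = 2 * (Real.sqrt (2 * Real.pi))⁻¹ * Real.exp (-(x + s) ^ 2 / 2) := by
        unfold gaussKernel; ring
    _ ≤ domFn x t := by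
        unfold domFn
        exact mul_le_mul_of_nonneg_left hexp (by positivity)

lemma f_continuous (x : ℝ) :
    Continuous (fun t => gaussKernel (x + t) / freeBoundary (-t)) := by
  apply Continuous.div
  · exact (continuous_const.mul (Real.continuous_exp.comp (by fun_prop)) : Continuous fun t =>
      (Real.sqrt (2 * Real.pi))⁻¹ * Real.exp (-(x + t) ^ 2 / 2))
  · exact freeBoundary_continuous.comp continuous_neg
  · intro t; exact (freeBoundary_pos _).ne'

lemma f_integrableOn (x : ℝ) :
    IntegrableOn (fun t => gaussKernel (x + t) / freeBoundary (-t)) (Set.Ioi 0) := by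
  apply Integrable.mono' ((domFn_integrable x).integrableOn)
    ((f_continuous x).aestronglyMeasurable.restrict)
  rw [ae_restrict_iff' measurableSet_Ioi]
  filter_upwards with t ht
  rw [Real.norm_eq_abs, abs_of_nonneg (f_nonneg x t)]
  exact f_le_domFn x t t (le_of_lt ht) le_rfl (by linarith)


/-- The hard edge plasma function `H(x) = (1/√(2π)) ∫_{-∞}^0 e^{-(x-t)²/2} / φ(t) dt`. -/
noncomputable def plasmaH (x : ℝ) : ℝ :=
  (Real.sqrt (2 * Real.pi))⁻¹ *
    ∫ t in Set.Iio (0 : ℝ), Real.exp (-(x - t) ^ 2 / 2) / freeBoundary t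

lemma plasmaH_eq (x : ℝ) :
    plasmaH x = ∫ t in Set.Ioi (0:ℝ), gaussKernel (x + t) / freeBoundary (-t) := by
  unfold plasmaH
  have h1 : (fun t : ℝ => Real.exp (-(x - t) ^ 2 / 2) / freeBoundary t)
      = fun t : ℝ => (fun u : ℝ => Real.exp (-(x + u) ^ 2 / 2) / freeBoundary (-u)) (-t) := by
    funext t
    simp only [neg_neg, ← sub_eq_add_neg]
  rw [h1, ← MeasureTheory.integral_Iic_eq_integral_Iio, integral_comp_neg_Iic (0:ℝ)
      (fun u : ℝ => Real.exp (-(x + u) ^ 2 / 2) / freeBoundary (-u)), neg_zero,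
    ← MeasureTheory.integral_const_mul]
  congr 1
  funext t
  unfold gaussKernel
  rw [mul_div_assoc]

lemma step_integral (F : ℝ → ℝ) (δ : ℝ) (hδ : 0 < δ) (M : ℕ) :
    (∫ t in Set.Ioi (0:ℝ), if t ≤ (M:ℝ) * δ then F (δ * ⌈t / δ⌉) else 0)
      = ∑ i ∈ Finset.range M, δ * F (((i:ℝ) + 1) * δ) := by
  set G : ℝ → ℝ := fun t => if t ≤ (M:ℝ) * δ then F (δ * ⌈t / δ⌉) else 0 with hG
  have hMδ : (0:ℝ) ≤ (M:ℝ) * δ := by positivity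
  -- on each piece, G equals a constant
  have hEq : ∀ i : ℕ, i < M → Set.EqOn (fun _ : ℝ => F (((i:ℝ) + 1) * δ)) G
      (Set.Ioc ((i:ℝ) * δ) (((i:ℝ) + 1) * δ)) := by
    intro i hi t ht
    obtain ⟨ht1, ht2⟩ := ht
    have hceil : ⌈t / δ⌉ = (i : ℤ) + 1 := by
      rw [Int.ceil_eq_iff]
      constructor
      · push_cast
        rw [lt_div_iff₀ hδ]
        simpa using ht1
      · rw [div_le_iff₀ hδ]
        push_cast
        linarith
    have hle : t ≤ (M:ℝ) * δ := by
      refine ht2.trans ?_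
      have : ((i:ℝ) + 1) ≤ (M:ℝ) := by exact_mod_cast hi
      nlinarith
    simp only [hG, if_pos hle, hceil]
    push_cast
    ring_nf
  -- each piece is interval integrable
  have hpiece : ∀ i : ℕ, i < M →
      IntervalIntegrable G volume ((i:ℝ) * δ) (((i:ℝ) + 1) * δ) := by
    intro i hi
    rw [intervalIntegrable_iff_integrableOn_Ioc_of_le (by nlinarith)]
    refine MeasureTheory.IntegrableOn.congr_fun ?_ (hEq i hi) measurableSet_Ioc
    exact integrableOn_const (by rw [Real.volume_Ioc]; exact ENNReal.ofReal_ne_top)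
  -- interval integrability up to M
  have hupto : ∀ m : ℕ, m ≤ M → IntervalIntegrable G volume 0 ((m:ℝ) * δ) := by
    intro m hm
    induction m with
    | zero => simp
    | succ k ih =>
      have h1 : IntervalIntegrable G volume 0 ((k:ℝ) * δ) := ih (by omega)
      have h2 : IntervalIntegrable G volume ((k:ℝ) * δ) (((k:ℝ) + 1) * δ) :=
        hpiece k (by omega)
      have := h1.trans h2
      convert this using 2
      push_cast
      ring
  -- value of each piece integral
  have hval : ∀ i : ℕ, i < M →
      ∫ t in ((i:ℝ) * δ)..(((i:ℝ) + 1) * δ), G t = δ * F (((i:ℝ) + 1) * δ) := by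
    intro i hi
    rw [intervalIntegral.integral_of_le (by nlinarith),
      ← MeasureTheory.setIntegral_congr_fun measurableSet_Ioc (hEq i hi),
      MeasureTheory.setIntegral_const, MeasureTheory.measureReal_def, Real.volume_Ioc, ENNReal.toReal_ofReal (by nlinarith),
      smul_eq_mul]
    ring
  -- split Ioi 0 = Ioc 0 (Mδ) ∪ Ioi (Mδ)
  have hIocInt : IntegrableOn G (Set.Ioc (0:ℝ) ((M:ℝ) * δ)) := by
    rw [← intervalIntegrable_iff_integrableOn_Ioc_of_le hMδ]
    exact hupto M le_rfl
  have hIoiInt : IntegrableOn G (Set.Ioi ((M:ℝ) * δ)) := by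
    refine MeasureTheory.IntegrableOn.congr_fun (integrableOn_zero) ?_ measurableSet_Ioi
    intro t ht
    simp only [hG, if_neg (not_le.2 (Set.mem_Ioi.1 ht))]
  have hsplit : ∫ t in Set.Ioi (0:ℝ), G t
      = (∫ t in Set.Ioc (0:ℝ) ((M:ℝ) * δ), G t) + ∫ t in Set.Ioi ((M:ℝ) * δ), G t := by
    rw [← MeasureTheory.setIntegral_union _ measurableSet_Ioi hIocInt hIoiInt,
      Set.Ioc_union_Ioi_eq_Ioi hMδ]
    rw [Set.disjoint_left]
    rintro t ⟨_, h1⟩ h2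
    exact absurd h1 (not_le.2 h2)
  have hzero : ∫ t in Set.Ioi ((M:ℝ) * δ), G t = 0 := by
    rw [MeasureTheory.setIntegral_congr_fun measurableSet_Ioi
      (fun t ht => by simp only [hG, if_neg (not_le.2 (Set.mem_Ioi.1 ht))] : Set.EqOn G (fun _ => (0:ℝ)) _)]
    simp
  have hsum : ∑ i ∈ Finset.range M, ∫ t in ((i:ℝ) * δ)..(((i:ℝ) + 1) * δ), G t
      = ∫ t in (0:ℝ)..((M:ℝ) * δ), G t := by
    have := intervalIntegral.sum_integral_adjacent_intervals
      (a := fun i : ℕ => (i:ℝ) * δ) (μ := volume) (f := G) (n := M) ?_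
    · simpa using this
    · intro k hk
      have := hpiece k hk
      convert this using 2
      push_cast
      ring
  have : ∑ i ∈ Finset.range M, ∫ t in ((i:ℝ) * δ)..(((i:ℝ) + 1) * δ), G t
      = ∑ i ∈ Finset.range M, δ * F (((i:ℝ) + 1) * δ) :=
    Finset.sum_congr rfl (fun i hi => hval i (Finset.mem_range.1 hi))
  rw [hsplit, hzero, add_zero, intervalIntegral.integral_of_le hMδ] at *
  rw [← this, hsum]

lemma tendsto_sqrt_nat : Tendsto (fun n : ℕ => Real.sqrt n) atTop atTop := by
  rw [tendsto_atTop_atTop]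
  intro b
  refine ⟨⌈b⌉₊ ^ 2, fun n hn => ?_⟩
  calc b ≤ (⌈b⌉₊ : ℝ) := Nat.le_ceil b
    _ = Real.sqrt ((⌈b⌉₊ : ℝ) ^ 2) := (Real.sqrt_sq (Nat.cast_nonneg _)).symm
    _ ≤ Real.sqrt n := Real.sqrt_le_sqrt (by exact_mod_cast hn)


/-- Riemann sum convergence to the hard edge plasma function:
`(ℓ/√n) Σ_{k=1}^{⌊√n log n⌋} γ(2x + kℓ/√n)/φ(−kℓ/√n) → H(2x)` as `n → ∞`. -/
theorem riemann_sum_to_plasmaH (x ℓ : ℝ) (hℓ : 0 < ℓ) :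
    Tendsto (fun n : ℕ =>
        (ℓ / Real.sqrt n) *
          ∑ k ∈ Finset.Icc 1 ⌊Real.sqrt n * Real.log n⌋₊,
            gaussKernel (2 * x + k * ℓ / Real.sqrt n) /
              freeBoundary (-(k * ℓ) / Real.sqrt n))
      atTop (nhds (plasmaH (2 * x))) := by
  set F : ℝ → ℝ := fun t => gaussKernel (2 * x + t) / freeBoundary (-t) with hF
  set δ : ℕ → ℝ := fun n => ℓ / Real.sqrt n with hδdef
  set M : ℕ → ℕ := fun n => ⌊Real.sqrt n * Real.log n⌋₊ with hMdef
  set g : ℕ → ℝ → ℝ :=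
    fun n t => if t ≤ (M n : ℝ) * δ n then F (δ n * ⌈t / δ n⌉) else 0 with hg
  have hδpos : ∀ n : ℕ, 1 ≤ n → 0 < δ n := by
    intro n hn
    apply div_pos hℓ
    apply Real.sqrt_pos.2
    exact_mod_cast Nat.lt_of_lt_of_le Nat.zero_lt_one hn
  have hδ0 : Tendsto δ atTop (𝓝 0) :=
    Tendsto.div_atTop tendsto_const_nhds tendsto_sqrt_nat
  have hb_tendsto : Tendsto (fun n => (M n : ℝ) * δ n) atTop atTop := by
    apply tendsto_atTop_mono' atTop
      (f₁ := fun n : ℕ => ℓ * Real.log n - ℓ)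
    · filter_upwards [eventually_ge_atTop 1] with n hn
      have hs1 : (1:ℝ) ≤ Real.sqrt n := by
        rw [show (1:ℝ) = Real.sqrt 1 by simp]
        exact Real.sqrt_le_sqrt (by exact_mod_cast hn)
      have hs0 : (0:ℝ) < Real.sqrt n := by linarith
      have hfl : Real.sqrt n * Real.log n - 1 ≤ (M n : ℝ) :=
        (Nat.sub_one_lt_floor _).le
      have h1 : (Real.sqrt n * Real.log n - 1) * δ n ≤ (M n : ℝ) * δ n :=
        mul_le_mul_of_nonneg_right hfl (by positivity)
      have h2 : (Real.sqrt n * Real.log n - 1) * δ n = ℓ * Real.log n - ℓ / Real.sqrt n := by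
        simp only [hδdef]
        field_simp
      have h3 : ℓ / Real.sqrt n ≤ ℓ := by
        rw [div_le_iff₀ hs0]
        nlinarith
      show ℓ * Real.log n - ℓ ≤ (M n : ℝ) * δ n
      linarith
    · have hlog : Tendsto (fun n : ℕ => Real.log n) atTop atTop :=
        Real.tendsto_log_atTop.comp tendsto_natCast_atTop_atTop
      exact tendsto_atTop_add_const_right atTop (-ℓ)
        (hlog.const_mul_atTop hℓ) |>.congr (fun n => by ring_nf)
  obtain ⟨N, hN⟩ : ∃ N : ℕ, ∀ n ≥ N, 1 ≤ n ∧ δ n ≤ 1 := by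
    have h1 : ∀ᶠ n : ℕ in atTop, 1 ≤ n := eventually_ge_atTop 1
    have h2 : ∀ᶠ n : ℕ in atTop, δ n ≤ 1 :=
      (hδ0.eventually_lt_const (by norm_num : (0:ℝ) < 1)).mono fun n h => h.le
    exact eventually_atTop.1 (h1.and h2)
  -- key convergence via dominated convergence
  have key : Tendsto (fun n => ∫ t in Set.Ioi (0:ℝ), g n t) atTop
      (𝓝 (∫ t in Set.Ioi (0:ℝ), F t)) := by
    rw [← tendsto_add_atTop_iff_nat N]
    apply MeasureTheory.tendsto_integral_of_dominated_convergence (domFn (2 * x))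
    · intro k
      apply Measurable.aestronglyMeasurable
      apply Measurable.ite (measurableSet_Iic (a := (M (k + N) : ℝ) * δ (k + N)))
      · exact (f_continuous (2 * x)).measurable.comp
          (measurable_const.mul ((Measurable.of_discrete (f := (Int.cast : ℤ → ℝ))).comp
            (Int.measurable_ceil.comp (measurable_id.div_const _))))
      · exact measurable_const
    · exact (domFn_integrable (2 * x)).integrableOn
    · intro k
      rw [MeasureTheory.ae_restrict_iff' measurableSet_Ioi]
      filter_upwards with t ht
      obtain ⟨hn1, hn2⟩ := hN (k + N) (Nat.le_add_left N k)
      have hδp := hδpos (k + N) hn1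
      by_cases hle : t ≤ (M (k + N) : ℝ) * δ (k + N)
      · simp only [hg, if_pos hle]
        set s : ℝ := δ (k + N) * ⌈t / δ (k + N)⌉ with hs
        have hts : t ≤ s := by
          rw [hs]
          calc t = δ (k + N) * (t / δ (k + N)) := by field_simp
            _ ≤ δ (k + N) * ⌈t / δ (k + N)⌉ :=
              mul_le_mul_of_nonneg_left (Int.le_ceil _) hδp.le
        have hst : s ≤ t + 1 := by
          rw [hs]
          have h1 : (⌈t / δ (k + N)⌉ : ℝ) < t / δ (k + N) + 1 := Int.ceil_lt_add_one _
          have h2 : δ (k + N) * (⌈t / δ (k + N)⌉ : ℝ)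
              ≤ δ (k + N) * (t / δ (k + N) + 1) :=
            mul_le_mul_of_nonneg_left h1.le hδp.le
          have h3 : δ (k + N) * (t / δ (k + N) + 1) = t + δ (k + N) := by field_simp
          linarith
        have h0s : 0 ≤ s := le_trans (le_of_lt ht) hts
        rw [hF]
        rw [Real.norm_eq_abs, abs_of_nonneg (f_nonneg (2 * x) s)]
        exact f_le_domFn (2 * x) t s h0s hts hst
      · simp only [hg, if_neg hle, norm_zero]
        unfold domFn
        positivity
    · rw [MeasureTheory.ae_restrict_iff' measurableSet_Ioi]
      filter_upwards with t ht
      have hs_tendsto : Tendsto (fun n : ℕ => δ n * ⌈t / δ n⌉) atTop (𝓝 t) := by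
        apply tendsto_of_tendsto_of_tendsto_of_le_of_le'
          (tendsto_const_nhds : Tendsto (fun _ : ℕ => t) atTop (𝓝 t))
          (by simpa using (tendsto_const_nhds.add hδ0) :
            Tendsto (fun n : ℕ => t + δ n) atTop (𝓝 t))
        · filter_upwards [eventually_ge_atTop 1] with n hn
          have hδp := hδpos n hn
          calc t = δ n * (t / δ n) := by field_simp
            _ ≤ δ n * ⌈t / δ n⌉ := mul_le_mul_of_nonneg_left (Int.le_ceil _) hδp.le
        · filter_upwards [eventually_ge_atTop 1] with n hn
          have hδp := hδpos n hn
          have h1 : (⌈t / δ n⌉ : ℝ) < t / δ n + 1 := Int.ceil_lt_add_one _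
          have h2 : δ n * (⌈t / δ n⌉ : ℝ) ≤ δ n * (t / δ n + 1) :=
            mul_le_mul_of_nonneg_left h1.le hδp.le
          have h3 : δ n * (t / δ n + 1) = t + δ n := by field_simp
          linarith
      have hcomp : Tendsto (fun k : ℕ => F (δ (k + N) * ⌈t / δ (k + N)⌉)) atTop (𝓝 (F t)) :=
        ((f_continuous (2 * x)).tendsto t).comp
          (hs_tendsto.comp (tendsto_add_atTop_nat N))
      apply hcomp.congr'
      have hev : ∀ᶠ k : ℕ in atTop, t ≤ (M (k + N) : ℝ) * δ (k + N) :=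
        (tendsto_add_atTop_nat N).eventually (hb_tendsto.eventually_ge_atTop t)
      filter_upwards [hev] with k hk
      simp only [hg, if_pos hk]
  -- eventual equality of the Riemann sum with the step integral
  have heq : ∀ᶠ n : ℕ in atTop,
      (ℓ / Real.sqrt n) *
          ∑ k ∈ Finset.Icc 1 ⌊Real.sqrt n * Real.log n⌋₊,
            gaussKernel (2 * x + k * ℓ / Real.sqrt n) /
              freeBoundary (-(k * ℓ) / Real.sqrt n)
        = ∫ t in Set.Ioi (0:ℝ), g n t := by
    filter_upwards [eventually_ge_atTop (max N 1)] with n hn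
    have hn1 : 1 ≤ n := le_trans (le_max_right N 1) hn
    have hδp := hδpos n hn1
    have hs0 : (0:ℝ) < Real.sqrt n := Real.sqrt_pos.2 (by exact_mod_cast hn1)
    have hstep := step_integral F (δ n) hδp (M n)
    simp only [hg]
    rw [hstep]
    rw [show Finset.Icc 1 ⌊Real.sqrt n * Real.log n⌋₊
        = Finset.Ico 1 (⌊Real.sqrt n * Real.log n⌋₊ + 1) from (Finset.Ico_add_one_right_eq_Icc ..).symm,
      Finset.sum_Ico_eq_sum_range]
    simp only [Nat.add_sub_cancel]
    rw [Finset.mul_sum]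
    apply Finset.sum_congr rfl
    intro i _
    have h1 : (↑(1 + i) : ℝ) * ℓ / Real.sqrt n = ((i:ℝ) + 1) * δ n := by
      simp only [hδdef]
      push_cast
      ring
    have h2 : -((↑(1 + i) : ℝ) * ℓ) / Real.sqrt n = -(((i:ℝ) + 1) * δ n) := by
      rw [neg_div, h1]
    rw [h1, h2]
  have hfin : ∫ t in Set.Ioi (0:ℝ), F t = plasmaH (2 * x) := (plasmaH_eq (2 * x)).symm
  rw [← hfin]
  exact Tendsto.congr' (heq.mono fun n h => h.symm) key
end

section
/- Integration along the foliation flow (change of variables formula): let a < b be real numbers, let A = {ζ ∈ ℂ : ρ < |ζ| < ρ′} be an annulus with ρ < 1 < ρ′, and for each t ∈ [a,b] let ψ_t : A → ℂ be holomorphic, such that the map (t, ζ) ↦ ψ_t(ζ) is C¹ jointly in (t, ζ). Suppose that the map Ψ : [a,b] × 𝕋 → ℂ, Ψ(t, η) = ψ_t(η), is injective with image D, and that J(t, η) := Re(−conj(η) · ∂_t ψ_t(η) · conj(ψ_t′(η))) > 0 for all (t, η) ∈ [a,b] × 𝕋. Then D is measurable and for every function f : ℂ → ℂ that is absolutely integrable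 on D with respect to dA, one has ∫_D f dA = 2 ∫_a^b ∫_𝕋 f(ψ_t(η)) · J(t, η) ds(η) dt. -/
open MeasureTheory Real

/-- The Lebesgue area measure on `ℂ` divided by `π`, so the unit disk has measure 1. -/
noncomputable def dA : Measure ℂ := (ENNReal.ofReal Real.pi)⁻¹ • (volume : Measure ℂ)

lemma det_aux (A B : ℂ) :
    (Complex.reCLM.smulRight A + Complex.imCLM.smulRight B : ℂ →L[ℝ] ℂ).det
      = A.re * B.im - A.im * B.re := by
  rw [ContinuousLinearMap.det, ← LinearMap.det_toMatrix Complex.basisOneI,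
    Matrix.det_fin_two]
  simp [LinearMap.toMatrix_apply, Complex.coe_basisOneI_repr, Complex.coe_basisOneI]
  ring

lemma expI_norm (θ : ℝ) : ‖Complex.exp (θ * Complex.I)‖ = 1 := by
  simp [Complex.norm_exp_ofReal_mul_I]

lemma expI_injOn : Set.InjOn (fun θ : ℝ => Complex.exp (θ * Complex.I)) (Set.Ico 0 (2*π)) := by
  intro x hx y hy hxy
  simp only at hxy
  rw [Complex.exp_eq_exp_iff_exists_int] at hxy
  obtain ⟨n, hn⟩ := hxy
  have h2 : (x:ℂ) * Complex.I = (↑(y + n * (2*π)) : ℂ) * Complex.I := by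
    push_cast; rw [hn]; ring
  have h3 : x = y + n * (2*π) := by
    have := mul_right_cancel₀ Complex.I_ne_zero h2
    exact_mod_cast this
  have hn0 : n = 0 := by
    by_contra h0
    rcases lt_or_gt_of_ne h0 with h | h
    · have h1 : n ≤ -1 := by omega
      have : (n:ℝ) ≤ -1 := by exact_mod_cast h1
      nlinarith [hx.1, hy.2, Real.pi_pos]
    · have h1 : (1:ℤ) ≤ n := h
      have : (1:ℝ) ≤ (n:ℝ) := by exact_mod_cast h1
      nlinarith [hx.2, hy.1, Real.pi_pos]
  rw [hn0] at h3; push_cast at h3; linarith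

lemma expI_surj {z : ℂ} (hz : ‖z‖ = 1) :
    ∃ θ ∈ Set.Ico 0 (2*π), Complex.exp (θ * Complex.I) = z := by
  have habs : ‖z‖ = 1 := hz
  have hexp : Complex.exp (Complex.arg z * Complex.I) = z := by
    have := Complex.norm_mul_exp_arg_mul_I z
    rwa [habs, Complex.ofReal_one, one_mul] at this
  rcases le_or_gt 0 (Complex.arg z) with h | h
  · exact ⟨Complex.arg z, ⟨h, lt_of_le_of_lt (Complex.arg_le_pi z)
      (by linarith [Real.pi_pos])⟩, hexp⟩
  · refine ⟨Complex.arg z + 2*π, ⟨by linarith [Complex.neg_pi_lt_arg z, Real.pi_pos],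
      by linarith [Real.pi_pos]⟩, ?_⟩
    rw [show ((Complex.arg z + 2*π : ℝ) : ℂ) * Complex.I
        = Complex.arg z * Complex.I + 2*π*Complex.I by push_cast; ring,
      Complex.exp_add, Complex.exp_two_pi_mul_I, mul_one, hexp]

noncomputable def D2 (z : ℂ) : ℂ →L[ℝ] ℂ :=
  Complex.exp (z.im * Complex.I) • (Complex.imCLM.smulRight Complex.I)

lemma hasFDerivAt_expIm (z : ℂ) :
    HasFDerivAt (fun w : ℂ => Complex.exp (w.im * Complex.I)) (D2 z) z := by
  have h := ((Complex.imCLM.smulRight Complex.I : ℂ →L[ℝ] ℂ).hasFDerivAt (x := z)).cexp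
  have e1 : ∀ w : ℂ, ((Complex.imCLM.smulRight Complex.I : ℂ →L[ℝ] ℂ) w)
      = ↑w.im * Complex.I := by
    intro w; simp [Complex.real_smul]
  simp only [e1] at h
  exact h

lemma D2_apply (z w : ℂ) :
    D2 z w = w.im • (Complex.I * Complex.exp (z.im * Complex.I)) := by
  simp [D2, Complex.real_smul, smul_eq_mul]
  ring

lemma det_J (η A B : ℂ) :
    A.re * (Complex.I * η * B).im - A.im * (Complex.I * η * B).re
      = -((-(starRingEnd ℂ) η * A * (starRingEnd ℂ) B).re) := by
  simp [Complex.mul_re, Complex.mul_im, Complex.conj_re, Complex.conj_im]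
  ring

/-- Integration along the foliation flow (change of variables formula): if
`Ψ(t, η) = ψ_t(η)` is injective on `[a,b] × 𝕋` with image `D` and the Jacobian factor
`J(t,η) = Re(−η̄ ∂_t ψ_t(η) conj(ψ_t′(η)))` is positive there, then `D` is measurable and
`∫_D f dA = 2 ∫_a^b ∫_𝕋 f(ψ_t(η)) J(t,η) ds(η) dt` for every `f` absolutely
integrable on `D`. Here `∫_𝕋 g ds = (2π)⁻¹ ∫_0^{2π} g(e^{iθ}) dθ`. -/
theorem foliation_flow_change_of_variables
    (a b : ℝ) (hab : a < b) (ρ ρ' : ℝ) (hρ : ρ < 1) (hρ' : 1 < ρ')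
    (ψ : ℝ → ℂ → ℂ)
    (hhol : ∀ t ∈ Set.Icc a b, DifferentiableOn ℂ (ψ t) {ζ : ℂ | ρ < ‖ζ‖ ∧ ‖ζ‖ < ρ'})
    (hC1 : ContDiffOn ℝ 1 (fun p : ℝ × ℂ => ψ p.1 p.2)
      (Set.Icc a b ×ˢ {ζ : ℂ | ρ < ‖ζ‖ ∧ ‖ζ‖ < ρ'}))
    (hinj : Set.InjOn (fun p : ℝ × ℂ => ψ p.1 p.2) (Set.Icc a b ×ˢ Metric.sphere (0 : ℂ) 1))
    (J : ℝ → ℂ → ℝ)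
    (hJ : ∀ t η, J t η =
      (-(starRingEnd ℂ) η * deriv (fun s => ψ s η) t * (starRingEnd ℂ) (deriv (ψ t) η)).re)
    (hJpos : ∀ t ∈ Set.Icc a b, ∀ η ∈ Metric.sphere (0 : ℂ) 1, 0 < J t η) :
    MeasurableSet
      ((fun p : ℝ × ℂ => ψ p.1 p.2) '' (Set.Icc a b ×ˢ Metric.sphere (0 : ℂ) 1)) ∧
    ∀ f : ℂ → ℂ,
      IntegrableOn f
        ((fun p : ℝ × ℂ => ψ p.1 p.2) '' (Set.Icc a b ×ˢ Metric.sphere (0 : ℂ) 1)) dA →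
      ∫ z in (fun p : ℝ × ℂ => ψ p.1 p.2) '' (Set.Icc a b ×ˢ Metric.sphere (0 : ℂ) 1),
          f z ∂dA =
        2 * ∫ t in a..b,
          (2 * Real.pi : ℂ)⁻¹ *
            ∫ θ in (0 : ℝ)..(2 * Real.pi),
              f (ψ t (Complex.exp (θ * Complex.I))) *
                ((J t (Complex.exp (θ * Complex.I)) : ℝ) : ℂ) := by
  have hπ := Real.pi_pos
  set A : Set ℂ := {ζ : ℂ | ρ < ‖ζ‖ ∧ ‖ζ‖ < ρ'} with hAdef
  have hAopen : IsOpen A := by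
    have h1 : IsOpen {ζ : ℂ | ρ < ‖ζ‖} := isOpen_lt continuous_const continuous_norm
    have h2 : IsOpen {ζ : ℂ | ‖ζ‖ < ρ'} := isOpen_lt continuous_norm continuous_const
    exact h1.inter h2
  set S : Set (ℝ × ℂ) := Set.Icc a b ×ˢ A with hSdef
  set Φ : ℝ × ℂ → ℂ := fun p => ψ p.1 p.2 with hΦdef
  set e : ℝ → ℂ := fun θ => Complex.exp (θ * Complex.I) with hedef
  have he_sphere : ∀ θ : ℝ, e θ ∈ Metric.sphere (0:ℂ) 1 := fun θ =>
    mem_sphere_zero_iff_norm.mpr (expI_norm θ)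
  have hsub : Metric.sphere (0:ℂ) 1 ⊆ A := fun η hη => by
    have h1 : ‖η‖ = 1 := mem_sphere_zero_iff_norm.mp hη
    exact ⟨by rw [h1]; exact hρ, by rw [h1]; exact hρ'⟩
  set g : ℂ → ℂ := fun z => ψ z.re (e z.im) with hgdef
  set s : Set ℂ := Complex.measurableEquivRealProd ⁻¹' (Set.Icc a b ×ˢ Set.Ico 0 (2*π))
    with hsdef
  have hs_meas : MeasurableSet s :=
    (measurableSet_Icc.prod measurableSet_Ico).preimage
      Complex.measurableEquivRealProd.measurable
  have hmapsTo : Set.MapsTo (fun z : ℂ => ((z.re, e z.im) : ℝ × ℂ)) s S := fun z hz =>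
    Set.mk_mem_prod hz.1 (hsub (he_sphere z.im))
  -- injectivity of g on s
  have hg_inj : Set.InjOn g s := by
    intro z1 h1 z2 h2 hgz
    have hkey : ((z1.re, e z1.im) : ℝ × ℂ) = (z2.re, e z2.im) :=
      hinj (Set.mk_mem_prod h1.1 (he_sphere _)) (Set.mk_mem_prod h2.1 (he_sphere _)) hgz
    have hre : z1.re = z2.re := congrArg Prod.fst hkey
    have him : z1.im = z2.im := expI_injOn h1.2 h2.2 (congrArg Prod.snd hkey)
    exact Complex.ext hre him
  -- image
  have himg : g '' s = Φ '' (Set.Icc a b ×ˢ Metric.sphere (0:ℂ) 1) := by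
    apply Set.Subset.antisymm
    · rintro _ ⟨z, hz, rfl⟩
      exact ⟨(z.re, e z.im), Set.mk_mem_prod hz.1 (he_sphere _), rfl⟩
    · rintro _ ⟨⟨t, η⟩, ⟨ht, hη⟩, rfl⟩
      obtain ⟨θ, hθ, hθη⟩ := expI_surj (mem_sphere_zero_iff_norm.mp hη)
      refine ⟨⟨t, θ⟩, ⟨ht, hθ⟩, ?_⟩
      show ψ (Complex.mk t θ).re (e (Complex.mk t θ).im) = ψ t η
      rw [show (Complex.mk t θ).re = t from rfl, show (Complex.mk t θ).im = θ from rfl]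
      rw [show e θ = η from hθη]
  -- measurability of the image
  have hgc : ContinuousOn g s := by
    have hhc : Continuous (fun z : ℂ => ((z.re, e z.im) : ℝ × ℂ)) := by
      refine Continuous.prodMk Complex.continuous_re ?_
      exact Complex.continuous_exp.comp
        ((Complex.continuous_ofReal.comp Complex.continuous_im).mul continuous_const)
    exact hC1.continuousOn.comp hhc.continuousOn hmapsTo
  have hDmeas : MeasurableSet (g '' s) :=
    hs_meas.image_of_continuousOn_injOn hgc hg_inj
  -- derivatives
  have hΦdiff : DifferentiableOn ℝ Φ S := hC1.differentiableOn one_ne_zero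
  set DΦ : ℝ × ℂ → (ℝ × ℂ) →L[ℝ] ℂ := fun p => fderivWithin ℝ Φ S p with hDΦdef
  have hΦderiv : ∀ p ∈ S, HasFDerivWithinAt Φ (DΦ p) S p := fun p hp =>
    (hΦdiff p hp).hasFDerivWithinAt
  set Dh : ℂ → ℂ →L[ℝ] (ℝ × ℂ) := fun z => Complex.reCLM.prod (D2 z) with hDhdef
  have hh : ∀ z : ℂ, HasFDerivAt (fun w : ℂ => ((w.re, e w.im) : ℝ × ℂ)) (Dh z) z := fun z =>
    HasFDerivAt.prodMk (Complex.reCLM.hasFDerivAt) (hasFDerivAt_expIm z)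
  set L : ℂ → ℂ →L[ℝ] ℂ := fun z => (DΦ (z.re, e z.im)).comp (Dh z) with hLdef
  have hL : ∀ z ∈ s, HasFDerivWithinAt g (L z) s z := fun z hz =>
    by have h1 := hΦderiv _ (hmapsTo hz); exact h1.comp z (hh z).hasFDerivWithinAt hmapsTo
  -- partial derivative in the ζ direction
  have claim1 : ∀ p ∈ S, ∀ v : ℂ, DΦ p (0, v) = v * deriv (ψ p.1) p.2 := by
    rintro ⟨t, η⟩ hp v
    have ht : t ∈ Set.Icc a b := hp.1
    have hη : η ∈ A := hp.2
    have hincl : HasFDerivAt (fun ζ : ℂ => ((t, ζ) : ℝ × ℂ))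
        ((0 : ℂ →L[ℝ] ℝ).prod (ContinuousLinearMap.id ℝ ℂ)) η :=
      HasFDerivAt.prodMk (hasFDerivAt_const t η) (hasFDerivAt_id η)
    have hcomp : HasFDerivWithinAt (fun ζ => Φ (t, ζ))
        ((DΦ (t, η)).comp ((0 : ℂ →L[ℝ] ℝ).prod (ContinuousLinearMap.id ℝ ℂ))) A η :=
      (hΦderiv _ hp).comp η hincl.hasFDerivWithinAt (fun ζ hζ => Set.mk_mem_prod ht hζ)
    have hfull : HasFDerivAt (fun ζ => Φ (t, ζ))
        ((DΦ (t, η)).comp ((0 : ℂ →L[ℝ] ℝ).prod (ContinuousLinearMap.id ℝ ℂ))) η :=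
      hcomp.hasFDerivAt (hAopen.mem_nhds hη)
    have hder : HasDerivAt (ψ t) (deriv (ψ t) η) η :=
      ((hhol t ht).differentiableAt (hAopen.mem_nhds hη)).hasDerivAt
    have hfd : HasFDerivAt (ψ t)
        (((1 : ℂ →L[ℂ] ℂ).smulRight (deriv (ψ t) η)).restrictScalars ℝ) η :=
      hder.hasFDerivAt.restrictScalars ℝ
    have huniq := hfull.unique hfd
    have happ := ContinuousLinearMap.ext_iff.mp huniq v
    simpa [smul_eq_mul] using happ
  -- partial derivative in the t direction (interior points)
  have claim2 : ∀ (t : ℝ), t ∈ Set.Ioo a b → ∀ η ∈ A,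
      DΦ (t, η) (1, 0) = deriv (fun u => ψ u η) t := by
    intro t ht η hη
    have hp : (t, η) ∈ S := Set.mk_mem_prod (Set.mem_Icc_of_Ioo ht) hη
    have hincl : HasFDerivAt (fun u : ℝ => ((u, η) : ℝ × ℂ))
        ((ContinuousLinearMap.id ℝ ℝ).prod (0 : ℝ →L[ℝ] ℂ)) t :=
      HasFDerivAt.prodMk (hasFDerivAt_id t) (hasFDerivAt_const η t)
    have hcomp : HasFDerivWithinAt (fun u => Φ (u, η))
        ((DΦ (t, η)).comp ((ContinuousLinearMap.id ℝ ℝ).prod (0 : ℝ →L[ℝ] ℂ)))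
        (Set.Icc a b) t :=
      by have h1 := hΦderiv _ hp; exact h1.comp t hincl.hasFDerivWithinAt (fun u hu => Set.mk_mem_prod hu hη)
    have hfull := hcomp.hasFDerivAt (Icc_mem_nhds ht.1 ht.2)
    have hder := hfull.hasDerivAt
    have hval : ((DΦ (t, η)).comp
        ((ContinuousLinearMap.id ℝ ℝ).prod (0 : ℝ →L[ℝ] ℂ))) 1 = DΦ (t, η) (1, 0) := by
      simp
    rw [hval] at hder
    exact hder.deriv.symm
  -- the determinant computation
  have hdet : ∀ z ∈ s, z.re ∈ Set.Ioo a b → |(L z).det| = J z.re (e z.im) := by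
    intro z hz hzre
    have hη : e z.im ∈ A := hsub (he_sphere _)
    have hp : (z.re, e z.im) ∈ S := Set.mk_mem_prod (Set.mem_Icc_of_Ioo hzre) hη
    have hLeq : L z = Complex.reCLM.smulRight (deriv (fun u => ψ u (e z.im)) z.re)
        + Complex.imCLM.smulRight (Complex.I * e z.im * deriv (ψ z.re) (e z.im)) := by
      apply ContinuousLinearMap.ext
      intro w
      have e1 : Dh z w = (w.re, w.im • (Complex.I * e z.im)) := by
        simp only [hDhdef, ContinuousLinearMap.prod_apply, D2_apply]
        rfl
      have e2 : ((w.re, w.im • (Complex.I * e z.im)) : ℝ × ℂ)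
          = w.re • ((1:ℝ), (0:ℂ)) + ((0:ℝ), w.im • (Complex.I * e z.im)) := by
        simp [Prod.ext_iff]
      calc L z w = DΦ (z.re, e z.im) (Dh z w) := rfl
        _ = DΦ (z.re, e z.im) (w.re • ((1:ℝ), (0:ℂ)) + ((0:ℝ), w.im • (Complex.I * e z.im)))
            := by rw [e1, e2]
        _ = w.re • DΦ (z.re, e z.im) (1, 0)
            + DΦ (z.re, e z.im) (0, w.im • (Complex.I * e z.im)) := by
            rw [(DΦ (z.re, e z.im)).map_add, (DΦ (z.re, e z.im)).map_smul]
        _ = w.re • deriv (fun u => ψ u (e z.im)) z.re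
            + (w.im • (Complex.I * e z.im)) * deriv (ψ z.re) (e z.im) := by
            rw [claim2 z.re hzre (e z.im) hη, claim1 (z.re, e z.im) hp]
        _ = (Complex.reCLM.smulRight (deriv (fun u => ψ u (e z.im)) z.re)
            + Complex.imCLM.smulRight (Complex.I * e z.im * deriv (ψ z.re) (e z.im))) w := by
            simp [Complex.real_smul]
            ring
    rw [hLeq, det_aux, det_J, ← hJ, abs_neg,
      abs_of_pos (hJpos z.re (Set.mem_Icc_of_Ioo hzre) (e z.im) (he_sphere _))]
  refine ⟨himg ▸ hDmeas, ?_⟩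
  intro f hfint
  rw [← himg] at hfint ⊢
  -- pass from dA to volume
  have hc_ne0 : (ENNReal.ofReal π)⁻¹ ≠ 0 := by
    simp [ENNReal.inv_ne_zero]
  have hc_netop : (ENNReal.ofReal π)⁻¹ ≠ ⊤ := by
    rw [ENNReal.inv_ne_top]
    exact (ENNReal.ofReal_pos.mpr hπ).ne'
  have hfvol : IntegrableOn f (g '' s) volume := by
    have h1 := hfint
    rw [IntegrableOn, dA, Measure.restrict_smul] at h1
    exact (integrable_smul_measure hc_ne0 hc_netop).mp h1
  -- change of variables
  have key : ∫ z in g '' s, f z ∂volume = ∫ z in s, |(L z).det| • f (g z) ∂volume :=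
    integral_image_eq_integral_abs_det_fderiv_smul volume hs_meas hL hg_inj f
  have hint2 : IntegrableOn (fun z => |(L z).det| • f (g z)) s volume :=
    (integrableOn_image_iff_integrableOn_abs_det_fderiv_smul volume hs_meas hL hg_inj f).mp
      hfvol
  -- a.e. replace |det| by J
  have hnull : volume ({z : ℂ | z.re = a} ∪ {z : ℂ | z.re = b}) = 0 := by
    have h1 : ∀ c : ℝ, volume {z : ℂ | z.re = c} = 0 := by
      intro c
      have heq : {z : ℂ | z.re = c}
          = Complex.measurableEquivRealProd ⁻¹' (({c} : Set ℝ) ×ˢ Set.univ) := by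
        ext z
        simp [Complex.measurableEquivRealProd_apply, eq_comm]
      rw [heq, Complex.volume_preserving_equiv_real_prod.measure_preimage
        ((measurableSet_singleton c).prod MeasurableSet.univ).nullMeasurableSet]
      rw [Measure.volume_eq_prod, Measure.prod_prod]
      simp
    exact le_antisymm (le_trans (measure_union_le _ _) (by rw [h1 a, h1 b]; simp))
      zero_le
  have hae0 : ∀ᵐ z : ℂ ∂volume.restrict s, z.re ≠ a ∧ z.re ≠ b := by
    refine ae_restrict_of_ae ?_
    rw [ae_iff]
    refine measure_mono_null ?_ hnull
    intro z hz
    simp only [Set.mem_setOf_eq, not_and_or, not_not] at hz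
    simpa using hz
  have hae : (fun z => |(L z).det| • f (g z))
      =ᵐ[volume.restrict s] (fun z => J z.re (e z.im) • f (g z)) := by
    filter_upwards [hae0, ae_restrict_mem hs_meas] with z hz hzs
    have hIoo : z.re ∈ Set.Ioo a b :=
      ⟨lt_of_le_of_ne hzs.1.1 (Ne.symm hz.1), lt_of_le_of_ne hzs.1.2 hz.2⟩
    rw [hdet z hzs hIoo]
  have hint3 : IntegrableOn (fun z => J z.re (e z.im) • f (g z)) s volume :=
    hint2.congr hae
  have key2 : ∫ z in s, |(L z).det| • f (g z) ∂volume
      = ∫ z in s, J z.re (e z.im) • f (g z) ∂volume :=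
    integral_congr_ae hae
  -- transfer to ℝ × ℝ and apply Fubini
  set G : ℝ × ℝ → ℂ := fun p => J p.1 (e p.2) • f (ψ p.1 (e p.2)) with hGdef
  have htrans : ∫ z in s, J z.re (e z.im) • f (g z) ∂volume
      = ∫ p in Set.Icc a b ×ˢ Set.Ico 0 (2*π), G p := by
    rw [hsdef]
    exact Complex.volume_preserving_equiv_real_prod.setIntegral_preimage_emb
      Complex.measurableEquivRealProd.measurableEmbedding G _
  have hGint : IntegrableOn G (Set.Icc a b ×ˢ Set.Ico 0 (2*π)) volume := by
    refine (Complex.volume_preserving_equiv_real_prod.integrableOn_comp_preimage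
      Complex.measurableEquivRealProd.measurableEmbedding).mp ?_
    exact hint3
  have hfub : ∫ p in Set.Icc a b ×ˢ Set.Ico 0 (2*π), G p
      = ∫ t in Set.Icc a b, ∫ θ in Set.Ico 0 (2*π), G (t, θ) := by
    rw [Measure.volume_eq_prod] at hGint ⊢
    exact setIntegral_prod G hGint
  -- convert to interval integrals
  have houter : ∀ F : ℝ → ℂ, (∫ t in Set.Icc a b, F t) = ∫ t in a..b, F t := by
    intro F
    rw [intervalIntegral.integral_of_le hab.le, integral_Icc_eq_integral_Ioc]
  have hinner : ∀ F : ℝ → ℂ, (∫ θ in Set.Ico 0 (2*π), F θ) = ∫ θ in (0:ℝ)..(2*π), F θ := by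
    intro F
    rw [intervalIntegral.integral_of_le (by positivity : (0:ℝ) ≤ 2*π),
      integral_Ioc_eq_integral_Ioo, integral_Ico_eq_integral_Ioo]
  have hinner2 : ∀ t : ℝ, (∫ θ in Set.Ico 0 (2*π), G (t, θ))
      = ∫ θ in (0:ℝ)..(2*π), f (ψ t (Complex.exp (θ * Complex.I)))
          * ((J t (Complex.exp (θ * Complex.I)) : ℝ) : ℂ) := by
    intro t
    rw [hinner fun θ => G (t, θ)]
    apply intervalIntegral.integral_congr
    intro θ _
    show J t (e θ) • f (ψ t (e θ)) = _
    rw [hedef]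
    simp only [Complex.real_smul]
    ring
  -- put everything together
  have hLHS : ∫ z in g '' s, f z ∂dA = (π)⁻¹ • ∫ z in g '' s, f z ∂volume := by
    rw [dA, Measure.restrict_smul, integral_smul_measure, ENNReal.toReal_inv,
      ENNReal.toReal_ofReal hπ.le]
  rw [hLHS, key, key2, htrans, hfub, houter]
  have hfinal : (∫ t in a..b, ∫ θ in Set.Ico 0 (2*π), G (t, θ))
      = ∫ t in a..b, ∫ θ in (0:ℝ)..(2*π), f (ψ t (Complex.exp (θ * Complex.I)))
          * ((J t (Complex.exp (θ * Complex.I)) : ℝ) : ℂ) := by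
    apply intervalIntegral.integral_congr
    intro t _
    exact hinner2 t
  rw [hfinal]
  rw [show (fun t => (2 * Real.pi : ℂ)⁻¹ * ∫ θ in (0:ℝ)..(2*Real.pi),
      f (ψ t (Complex.exp (θ * Complex.I))) * ((J t (Complex.exp (θ * Complex.I)) : ℝ) : ℂ))
      = fun t => (2 * Real.pi : ℂ)⁻¹ * ∫ θ in (0:ℝ)..(2*Real.pi),
      f (ψ t (Complex.exp (θ * Complex.I))) * ((J t (Complex.exp (θ * Complex.I)) : ℝ) : ℂ)
      from rfl]
  rw [intervalIntegral.integral_const_mul]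
  set X : ℂ := ∫ t in a..b, ∫ θ in (0:ℝ)..(2*Real.pi),
    f (ψ t (Complex.exp (θ * Complex.I))) * ((J t (Complex.exp (θ * Complex.I)) : ℝ) : ℂ)
  have hπc : (π : ℂ) ≠ 0 := Complex.ofReal_ne_zero.mpr (ne_of_gt hπ)
  rw [Complex.real_smul, Complex.ofReal_inv]
  field_simp
end

section
/- Discarding lower order terms near the hard edge (instance of the reduction of Section 2.4 for the Ginibre potential): for every constant A > 0, sup over all ζ ∈ ℂ with 1 − A/√n ≤ |ζ| ≤ 1 of the sum Σ_{j} |ζ|^{2j} e^{−n|ζ|²} / c_{j,n}, taken over all integers j with 0 ≤ j ≤ n − √n · log n, tends to 0 as n → ∞. -/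
open MeasureTheory Real Filter

/-- `c_{j,n} = ∫_{|w| ≤ 1} |w|^{2j} e^{-n|w|²} dA(w)`. -/
noncomputable def cJN (j n : ℕ) : ℝ :=
  ∫ w in {w : ℂ | ‖w‖ ≤ 1}, ‖w‖ ^ (2 * j) * Real.exp (-(n : ℝ) * ‖w‖ ^ 2) ∂dA

lemma log_le_half_sub_inv {x : ℝ} (hx : 1 ≤ x) : Real.log x ≤ (x - x⁻¹) / 2 := by
  set g : ℝ → ℝ := fun y => (y - y⁻¹) / 2 - Real.log y with hg
  have key : ∀ y ∈ interior (Set.Ici (1:ℝ)), HasDerivAt g ((y - 1)^2 / (2 * y^2)) y := by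
    intro y hy
    rw [interior_Ici, Set.mem_Ioi] at hy
    have hy0 : y ≠ 0 := by linarith
    have h1 : HasDerivAt (fun y : ℝ => (y - y⁻¹) / 2 - Real.log y)
        ((1 - -(y^2)⁻¹) / 2 - y⁻¹) y := by
      exact (((hasDerivAt_id y).sub (hasDerivAt_inv hy0)).div_const 2).sub
        (Real.hasDerivAt_log hy0)
    convert h1 using 1
    field_simp
    ring
  have hmono : MonotoneOn g (Set.Ici (1:ℝ)) := by
    apply monotoneOn_of_deriv_nonneg (convex_Ici 1)
    · apply ContinuousOn.sub (ContinuousOn.div_const ?_ 2)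
      · exact Real.continuousOn_log.mono (by intro y hy; simp at hy ⊢; intro h; linarith)
      · exact (continuousOn_id.sub (continuousOn_inv₀.mono (by
          intro y hy; simp at hy ⊢; intro h; linarith)))
    · intro y hy
      exact (key y hy).differentiableAt.differentiableWithinAt
    · intro y hy
      rw [(key y hy).deriv]
      positivity
  have h1 : g 1 ≤ g x := hmono (by simp) (by simpa using hx) hx
  simp only [hg] at h1
  simp only [inv_one, sub_self, zero_div, Real.log_one, sub_zero] at h1
  linarith

lemma key_ineq (j : ℕ) (t : ℝ) (ht0 : 0 < t) (hjt : (j:ℝ) ≤ t) :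
    (t / j) ^ j * Real.exp (j - t) ≤ Real.exp (-(t - j)^2 / (2 * t)) := by
  rcases Nat.eq_zero_or_pos j with hj | hj
  · subst hj
    simp only [Nat.cast_zero, pow_zero, one_mul, zero_sub, sub_zero]
    rw [Real.exp_le_exp]
    have : -(t^2) / (2*t) = -(t/2) := by field_simp
    rw [this]
    linarith
  · have hj1 : (1:ℝ) ≤ (j:ℝ) := by exact_mod_cast hj
    have hjpos : (0:ℝ) < j := by linarith
    have hx : 1 ≤ t / j := (one_le_div hjpos).2 hjt
    have hlog := log_le_half_sub_inv hx
    have hpos : 0 < t / j := by positivity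
    have h1 : (t/j)^j = Real.exp ((j:ℝ) * Real.log (t/j)) := by
      rw [← Real.exp_log hpos, ← Real.exp_nat_mul, Real.log_exp]
    rw [h1, ← Real.exp_add, Real.exp_le_exp]
    rw [inv_div] at hlog
    have h2 : (j:ℝ) * Real.log (t/j) ≤ (j:ℝ) * ((t/j - j/t)/2) :=
      mul_le_mul_of_nonneg_left hlog hjpos.le
    have heq : (j:ℝ) * ((t/j - (j:ℝ)/t)/2) + ((j:ℝ) - t) = -(t - (j:ℝ))^2/(2*t) := by
      field_simp
      ring
    linarith

lemma pi_ne_zero' : ENNReal.ofReal Real.pi ≠ 0 := by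
  simp [ENNReal.ofReal_eq_zero, not_le, Real.pi_pos]

lemma dA_closedBall (r : ℝ) (hr : 0 ≤ r) :
    dA (Metric.closedBall (0:ℂ) r) = ENNReal.ofReal (r^2) := by
  rw [dA, Measure.smul_apply, smul_eq_mul, Complex.volume_closedBall,
    ← ENNReal.ofReal_coe_nnreal, NNReal.coe_real_pi,
    ← ENNReal.ofReal_pow hr, mul_comm, mul_assoc,
    ENNReal.mul_inv_cancel pi_ne_zero' ENNReal.ofReal_ne_top, mul_one]

lemma ball_set_eq : {w : ℂ | ‖w‖ ≤ 1} = Metric.closedBall 0 1 := by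
  ext w; simp [mem_closedBall_zero_iff]

lemma cJN_nonneg (j n : ℕ) : 0 ≤ cJN j n :=
  integral_nonneg fun w => by positivity

lemma cJN_lower (j n : ℕ) (hjn : j + 1 ≤ n) :
    ((j:ℝ)/n)^j * Real.exp (-((j:ℝ)+1)) * (1/n) ≤ cJN j n := by
  have hn0 : (0:ℝ) < n := by exact_mod_cast (by omega : 0 < n)
  set r1 : ℝ := Real.sqrt ((j:ℝ)/n) with hr1def
  set r2 : ℝ := Real.sqrt (((j:ℝ)+1)/n) with hr2def
  set S : Set ℂ := Metric.closedBall 0 r2 \ Metric.closedBall 0 r1 with hSdef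
  set f : ℂ → ℝ := fun w => ‖w‖ ^ (2*j) * Real.exp (-(n:ℝ) * ‖w‖^2) with hfdef
  have hfc : Continuous f := by fun_prop
  have hint1 : IntegrableOn f (Metric.closedBall (0:ℂ) 1) volume :=
    hfc.continuousOn.integrableOn_compact (isCompact_closedBall _ _)
  have hinttop : IntegrableOn f (Metric.closedBall (0:ℂ) 1) dA := by
    rw [IntegrableOn, dA, Measure.restrict_smul]
    exact hint1.smul_measure (ENNReal.inv_ne_top.2 pi_ne_zero')
  have hr12 : r1 ≤ r2 := Real.sqrt_le_sqrt (by gcongr; linarith)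
  have hr21 : r2 ≤ 1 := by
    rw [show (1:ℝ) = Real.sqrt 1 by simp]
    apply Real.sqrt_le_sqrt
    rw [div_le_one hn0]
    exact_mod_cast hjn
  have hSsub : S ⊆ Metric.closedBall (0:ℂ) 1 :=
    Set.diff_subset.trans (Metric.closedBall_subset_closedBall hr21)
  have hmeas : MeasurableSet S :=
    Metric.isClosed_closedBall.measurableSet.diff Metric.isClosed_closedBall.measurableSet
  have hSm : dA S = ENNReal.ofReal (1/n) := by
    rw [hSdef, measure_diff (Metric.closedBall_subset_closedBall hr12)
      Metric.isClosed_closedBall.measurableSet.nullMeasurableSet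
      (by rw [dA_closedBall r1 (Real.sqrt_nonneg _)]; exact ENNReal.ofReal_ne_top),
      dA_closedBall r1 (Real.sqrt_nonneg _), dA_closedBall r2 (Real.sqrt_nonneg _),
      Real.sq_sqrt (by positivity), Real.sq_sqrt (by positivity),
      ← ENNReal.ofReal_sub _ (by positivity)]
    congr 1
    field_simp
    ring
  have hbound : ∀ w ∈ S, ((j:ℝ)/n)^j * Real.exp (-((j:ℝ)+1)) ≤ f w := by
    intro w hw
    obtain ⟨hw2, hw1⟩ := hw
    rw [mem_closedBall_zero_iff] at hw2
    rw [Metric.mem_closedBall, Complex.dist_eq, sub_zero, not_le] at hw1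
    have hw1' : r1 ≤ ‖w‖ := by
      exact hw1.le
    have hsqle : ‖w‖^2 ≤ ((j:ℝ)+1)/n := by
      calc ‖w‖^2 ≤ r2^2 := pow_le_pow_left₀ (norm_nonneg w) hw2 2
      _ = ((j:ℝ)+1)/n := Real.sq_sqrt (by positivity)
    have hsqge : (j:ℝ)/n ≤ ‖w‖^2 := by
      calc (j:ℝ)/n = r1^2 := (Real.sq_sqrt (by positivity)).symm
      _ ≤ ‖w‖^2 := pow_le_pow_left₀ (Real.sqrt_nonneg _) hw1' 2
    have part1 : ((j:ℝ)/n)^j ≤ (‖w‖^2)^j := pow_le_pow_left₀ (by positivity) hsqge j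
    have part2 : Real.exp (-((j:ℝ)+1)) ≤ Real.exp (-(n:ℝ) * ‖w‖^2) := by
      rw [Real.exp_le_exp, neg_mul, neg_le_neg_iff, mul_comm]
      exact (le_div_iff₀ hn0).1 hsqle
    calc ((j:ℝ)/n)^j * Real.exp (-((j:ℝ)+1)) ≤ (‖w‖^2)^j * Real.exp (-(n:ℝ) * ‖w‖^2) :=
          mul_le_mul part1 part2 (Real.exp_pos _).le (by positivity)
      _ = f w := by rw [hfdef, ← pow_mul]
  calc ((j:ℝ)/n)^j * Real.exp (-((j:ℝ)+1)) * (1/n)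
      = ((j:ℝ)/n)^j * Real.exp (-((j:ℝ)+1)) * (dA S).toReal := by
        rw [hSm, ENNReal.toReal_ofReal (by positivity)]
    _ ≤ ∫ w in S, f w ∂dA :=
        by have h := setIntegral_ge_of_const_le_real hmeas (by rw [hSm]; exact ENNReal.ofReal_ne_top)
             hbound (hinttop.mono_set hSsub)
           exact h
    _ ≤ ∫ w in Metric.closedBall (0:ℂ) 1, f w ∂dA :=
        setIntegral_mono_set hinttop (Filter.Eventually.of_forall fun w => by positivity)
          (HasSubset.Subset.eventuallyLE hSsub)
    _ = cJN j n := by rw [cJN, ball_set_eq]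

set_option maxHeartbeats 2000000 in
/-- Discarding lower order terms near the hard edge: for every `A > 0`, the supremum over
`1 − A/√n ≤ |ζ| ≤ 1` of `Σ_{0 ≤ j ≤ n − √n log n} |ζ|^{2j} e^{−n|ζ|²}/c_{j,n}`
tends to `0` as `n → ∞`. -/

theorem discard_lower_order_terms (A : ℝ) (hA : 0 < A) :
    Tendsto (fun n : ℕ =>
        ⨆ ζ ∈ {ζ : ℂ | 1 - A / Real.sqrt n ≤ ‖ζ‖ ∧ ‖ζ‖ ≤ 1},
          ∑ j ∈ (Finset.range (n + 1)).filter
              (fun j : ℕ => (j : ℝ) ≤ (n : ℝ) - Real.sqrt n * Real.log n),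
            ‖ζ‖ ^ (2 * j) * Real.exp (-(n : ℝ) * ‖ζ‖ ^ 2) / cJN j n)
      atTop (nhds 0) := by
  have hlogT : Tendsto (fun n : ℕ => Real.log n) atTop atTop :=
    Real.tendsto_log_atTop.comp tendsto_natCast_atTop_atTop
  have hcastT : Tendsto (fun n : ℕ => (n:ℝ)) atTop atTop := tendsto_natCast_atTop_atTop
  apply squeeze_zero' (g := fun n : ℕ => 2 * Real.exp 1 / n)
  · refine Eventually.of_forall fun n => Real.iSup_nonneg fun ζ => Real.iSup_nonneg fun _ =>
      Finset.sum_nonneg fun j _ => div_nonneg (by positivity) (cJN_nonneg j n)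
  · filter_upwards [hlogT.eventually_ge_atTop 32, hlogT.eventually_ge_atTop (4*A),
      hcastT.eventually_ge_atTop ((A+1)^2), eventually_ge_atTop 1] with n h32 h4A hA1 hn1
    have hnR : (1:ℝ) ≤ n := by exact_mod_cast hn1
    have hn0 : (0:ℝ) < n := by linarith
    have hsA : A + 1 ≤ Real.sqrt n := by
      calc A + 1 = Real.sqrt ((A+1)^2) := (Real.sqrt_sq (by linarith)).symm
        _ ≤ Real.sqrt n := Real.sqrt_le_sqrt hA1
    have hs1 : (1:ℝ) ≤ Real.sqrt n := by linarith
    have hs0 : (0:ℝ) < Real.sqrt n := by linarith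
    have hs : Real.sqrt n ^ 2 = (n:ℝ) := Real.sq_sqrt hn0.le
    have hBnn : (0:ℝ) ≤ 2 * Real.exp 1 / n := by positivity
    set Q : ℝ := Real.exp (-(Real.log n)^2/8) with hQdef
    set B : ℝ := (n:ℝ) * Real.exp 1 * Q with hBdef
    have hQpos : 0 < Q := Real.exp_pos _
    have hBpos : 0 < B := by positivity
    -- final numeric bound
    have hfinal : ((n:ℝ) + 1) * B ≤ 2 * Real.exp 1 / n := by
      have hE : Q ≤ ((n:ℝ)⁻¹)^4 := by
        have h1 : -(Real.log n)^2/8 ≤ 4 * (-Real.log n) := by nlinarith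
        calc Q ≤ Real.exp (4 * (-Real.log n)) := Real.exp_le_exp.2 h1
          _ = Real.exp (-Real.log n) ^ 4 := by
              rw [show (4:ℝ) * (-Real.log n) =
                (-Real.log n) + ((-Real.log n) + ((-Real.log n) + (-Real.log n))) by ring,
                Real.exp_add, Real.exp_add, Real.exp_add]; ring
          _ = ((n:ℝ)⁻¹)^4 := by rw [Real.exp_neg, Real.exp_log hn0]
      have step : ((n:ℝ) + 1) * B ≤ ((n:ℝ) + 1) * ((n:ℝ) * Real.exp 1 * ((n:ℝ)⁻¹)^4) := by
        apply mul_le_mul_of_nonneg_left _ (by linarith)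
        exact mul_le_mul_of_nonneg_left hE (by positivity)
      refine step.trans ?_
      have expand : ((n:ℝ) + 1) * ((n:ℝ) * Real.exp 1 * ((n:ℝ)⁻¹)^4)
          = (((n:ℝ)+1) / (n:ℝ)^3) * Real.exp 1 := by
        field_simp
      have hfrac : ((n:ℝ)+1) / (n:ℝ)^3 ≤ 2 / (n:ℝ) := by
        rw [div_le_div_iff₀ (by positivity) hn0]
        nlinarith [mul_nonneg (mul_nonneg hn0.le hn0.le) (sub_nonneg.2 hnR),
          mul_nonneg hn0.le (sub_nonneg.2 hnR)]
      rw [expand, show 2 * Real.exp 1 / (n:ℝ) = (2 / (n:ℝ)) * Real.exp 1 by ring]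
      exact mul_le_mul_of_nonneg_right hfrac (Real.exp_pos 1).le
    -- the sup is bounded by (n+1) * B ≤ 2e/n
    apply Real.iSup_le _ hBnn
    intro ζ
    apply Real.iSup_le _ hBnn
    intro hζ
    obtain ⟨hr1, hr2⟩ := hζ
    set r : ℝ := ‖ζ‖ with hrdef
    have hr0 : 0 ≤ r := norm_nonneg ζ
    have h1A : 0 < 1 - A / Real.sqrt n := by
      rw [sub_pos, div_lt_one hs0]; linarith
    have hrpos : 0 < r := lt_of_lt_of_le h1A hr1
    set t : ℝ := (n:ℝ) * r^2 with htdef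
    have htpos : 0 < t := by positivity
    have hr21 : r^2 ≤ 1 := by nlinarith
    have ht_le : t ≤ (n:ℝ) := by
      rw [htdef]
      nlinarith
    have hsAe : Real.sqrt n * (1 - A/Real.sqrt n) = Real.sqrt n - A := by field_simp
    have e1 : (n:ℝ) * (1 - A/Real.sqrt n)^2 = (Real.sqrt n - A)^2 := by
      calc (n:ℝ) * (1 - A/Real.sqrt n)^2
          = (Real.sqrt n * (1 - A/Real.sqrt n))^2 := by rw [mul_pow, hs]
        _ = (Real.sqrt n - A)^2 := by rw [hsAe]
    have e2 : (Real.sqrt n - A)^2 = (n:ℝ) - 2*A*Real.sqrt n + A^2 := by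
      linear_combination hs
    have key1 : (n:ℝ) - 2*A*Real.sqrt n + A^2 ≤ t := by
      have hrr : (1 - A/Real.sqrt n)^2 ≤ r^2 := pow_le_pow_left₀ h1A.le hr1 2
      have := mul_le_mul_of_nonneg_left hrr hn0.le
      rw [e1, e2] at this
      exact this
    -- per-term bound
    have hterm : ∀ j ∈ (Finset.range (n + 1)).filter
        (fun j : ℕ => (j : ℝ) ≤ (n : ℝ) - Real.sqrt n * Real.log n),
        r ^ (2 * j) * Real.exp (-(n : ℝ) * r ^ 2) / cJN j n ≤ B := by
      intro j hj
      rw [Finset.mem_filter, Finset.mem_range] at hj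
      obtain ⟨_, hjle⟩ := hj
      have hslog : (32:ℝ) ≤ Real.sqrt n * Real.log n := by nlinarith
      have hjn1 : j + 1 ≤ n := by
        have : (j:ℝ) + 1 ≤ (n:ℝ) := by linarith
        exact_mod_cast this
      have hgap : Real.sqrt n * Real.log n / 2 ≤ t - j := by
        have hprod : 0 ≤ Real.sqrt n * (Real.log n - 4*A) :=
          mul_nonneg hs0.le (by linarith)
        nlinarith [sq_nonneg A]
      have hjt : (j:ℝ) ≤ t := by nlinarith
      -- Q bound on exp(-(t-j)^2/(2t))
      have hQb : Real.exp (-(t - j)^2 / (2 * t)) ≤ Q := by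
        rw [hQdef, Real.exp_le_exp, div_le_div_iff₀ (by positivity) (by positivity)]
        have hsq : (n:ℝ) * (Real.log n)^2/4 ≤ (t - j)^2 := by
          have h := pow_le_pow_left₀ (by positivity) hgap 2
          rw [div_pow, mul_pow, hs] at h
          norm_num at h
          linarith
        nlinarith [sq_nonneg (t - (j:ℝ)), sq_nonneg (Real.log n)]
      -- the chain
      have hkey := key_ineq j t htpos hjt
      set c0 : ℝ := ((j:ℝ)/n)^j * Real.exp (-((j:ℝ)+1)) * (1/n) with hc0def
      have hbase : 0 < ((j:ℝ)/n)^j := by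
        rcases Nat.eq_zero_or_pos j with h | h
        · simp [h]
        · have : (0:ℝ) < j := by exact_mod_cast h
          positivity
      have hc0pos : 0 < c0 := by positivity
      have hcl : c0 ≤ cJN j n := cJN_lower j n hjn1
      have hcJNpos : 0 < cJN j n := lt_of_lt_of_le hc0pos hcl
      have hmul : ((j:ℝ)/n)^j * (t/(j:ℝ))^j = (r^2)^j := by
        rcases Nat.eq_zero_or_pos j with h | h
        · simp [h]
        · have hj0 : ((j:ℝ)) ≠ 0 := Nat.cast_ne_zero.2 (by omega)
          have hb : (j:ℝ)/n * (t/(j:ℝ)) = r^2 := by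
            rw [htdef]; field_simp; try ring
          rw [← mul_pow, hb]
      have hnum : r ^ (2*j) * Real.exp (-(n:ℝ) * r^2) ≤ c0 * B := by
        have hnt : -(n:ℝ) * r^2 = -t := by rw [htdef]; ring
        rw [pow_mul, hnt]
        have hexp : Real.exp ((j:ℝ) - t) * Real.exp (-(j:ℝ)) = Real.exp (-t) := by
          rw [← Real.exp_add]; ring_nf
        have hchain : (r^2)^j * Real.exp (-t)
            = ((j:ℝ)/n)^j * Real.exp (-(j:ℝ)) * ((t/(j:ℝ))^j * Real.exp ((j:ℝ) - t)) := by
          rw [← hexp, ← hmul]; ring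
        rw [hchain]
        have hstep : ((j:ℝ)/n)^j * Real.exp (-(j:ℝ)) * ((t/(j:ℝ))^j * Real.exp ((j:ℝ) - t))
            ≤ ((j:ℝ)/n)^j * Real.exp (-(j:ℝ)) * Q :=
          mul_le_mul_of_nonneg_left (hkey.trans hQb) (by positivity)
        refine hstep.trans (le_of_eq ?_)
        have e3 : Real.exp (-((j:ℝ)+1)) * Real.exp 1 = Real.exp (-(j:ℝ)) := by
          rw [← Real.exp_add]; ring_nf
        calc ((j:ℝ)/n)^j * Real.exp (-(j:ℝ)) * Q
            = ((j:ℝ)/n)^j * (Real.exp (-((j:ℝ)+1)) * Real.exp 1) * Q := by rw [e3]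
          _ = c0 * B := by
              rw [hc0def, hBdef]
              field_simp
      rw [div_le_iff₀ hcJNpos]
      calc r ^ (2*j) * Real.exp (-(n:ℝ) * r^2) ≤ c0 * B := hnum
        _ ≤ cJN j n * B := mul_le_mul_of_nonneg_right hcl hBpos.le
        _ = B * cJN j n := by ring
    calc ∑ j ∈ (Finset.range (n + 1)).filter
          (fun j : ℕ => (j : ℝ) ≤ (n : ℝ) - Real.sqrt n * Real.log n),
          r ^ (2 * j) * Real.exp (-(n : ℝ) * r ^ 2) / cJN j n
        ≤ ((Finset.range (n + 1)).filter
          (fun j : ℕ => (j : ℝ) ≤ (n : ℝ) - Real.sqrt n * Real.log n)).card • B :=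
          Finset.sum_le_card_nsmul _ _ B hterm
      _ ≤ ((n:ℝ) + 1) * B := by
          rw [nsmul_eq_mul]
          apply mul_le_mul_of_nonneg_right _ hBpos.le
          have hcard := Finset.card_filter_le (Finset.range (n+1))
            (fun j : ℕ => (j : ℝ) ≤ (n : ℝ) - Real.sqrt n * Real.log n)
          rw [Finset.card_range] at hcard
          exact_mod_cast hcard
      _ ≤ 2 * Real.exp 1 / n := hfinal
  · exact tendsto_const_div_atTop_nhds_zero_nat _
end

section
/- Exterior decay of weighted orthonormal monomials (instance of Lemma 2.4(i) for the Ginibre potential): let 0 < τ₀ < 1 and a > 0. There exists a constant C > 0 such that for all integers n ≥ 1 and all integers j with τ₀ n ≤ j ≤ n − a√n, setting τ = j/n, one has for every ζ ∈ ℂ with √τ ≤ |ζ| ≤ 1 that |ζ|^{2j} e^{−n|ζ|²} / c_{j,n} ≤ C n · e^{−n(|ζ|² − τ − τ log(|ζ|²/τ))}. -/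
open MeasureTheory Real

lemma dA_finiteOnCompacts : IsFiniteMeasureOnCompacts dA :=
  IsFiniteMeasureOnCompacts.smul _ (by
    simp [ENNReal.inv_ne_top, ENNReal.ofReal_pos, Real.pi_pos])

lemma dA_annulus (r R : ℝ) (h0 : 0 ≤ r) (hrR : r ≤ R) :
    dA (Metric.closedBall (0 : ℂ) R \ Metric.ball 0 r) = ENNReal.ofReal (R ^ 2 - r ^ 2) := by
  have hR0 : 0 ≤ R := h0.trans hrR
  have hpi : ENNReal.ofReal Real.pi = (NNReal.pi : ENNReal) := by
    rw [← NNReal.coe_real_pi, ENNReal.ofReal_coe_nnreal]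
  have hball : volume (Metric.ball (0 : ℂ) r) ≠ ⊤ := by
    simp [Complex.volume_ball]
    exact ENNReal.mul_ne_top (by simp) ENNReal.coe_ne_top
  rw [dA, Measure.smul_apply,
    measure_diff (Metric.ball_subset_closedBall.trans (Metric.closedBall_subset_closedBall hrR)) measurableSet_ball.nullMeasurableSet hball,
    Complex.volume_ball, Complex.volume_closedBall, ← ENNReal.sub_mul (by intro _ _; exact ENNReal.coe_ne_top),
    ← ENNReal.ofReal_pow hR0, ← ENNReal.ofReal_pow h0,
    ← ENNReal.ofReal_sub _ (by positivity), ← hpi, smul_eq_mul]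
  rw [mul_comm (ENNReal.ofReal (R ^ 2 - r ^ 2)), ← mul_assoc,
    ENNReal.inv_mul_cancel (by simp [Real.pi_pos]) ENNReal.ofReal_ne_top, one_mul]

lemma cJN_ge (n j : ℕ) (hn : 1 ≤ n) (δ : ℝ) (hδ0 : 0 < δ)
    (hδ1 : (j : ℝ) / n + δ ≤ 1) :
    ((j : ℝ) / n) ^ j * Real.exp (-(n : ℝ) * ((j : ℝ) / n + δ)) * δ ≤ cJN j n := by
  haveI : IsFiniteMeasureOnCompacts dA := dA_finiteOnCompacts
  set τ : ℝ := (j : ℝ) / n with hτ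
  have hτ0 : 0 ≤ τ := by positivity
  set r : ℝ := Real.sqrt τ with hr
  set R : ℝ := Real.sqrt (τ + δ) with hRdef
  have hr0 : 0 ≤ r := Real.sqrt_nonneg _
  have hrR : r ≤ R := Real.sqrt_le_sqrt (by linarith)
  have hr2 : r ^ 2 = τ := Real.sq_sqrt hτ0
  have hR2 : R ^ 2 = τ + δ := Real.sq_sqrt (by linarith)
  set f : ℂ → ℝ := fun w => ‖w‖ ^ (2 * j) * Real.exp (-(n : ℝ) * ‖w‖ ^ 2) with hf
  set A : Set ℂ := Metric.closedBall (0 : ℂ) R \ Metric.ball 0 r with hA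
  have hset : {w : ℂ | ‖w‖ ≤ 1} = Metric.closedBall (0 : ℂ) 1 := by
    ext w; simp [mem_closedBall_zero_iff]
  have hfc : Continuous f := by
    apply Continuous.mul
    · exact continuous_norm.pow _
    · exact Real.continuous_exp.comp (by continuity)
  have hint : IntegrableOn f {w : ℂ | ‖w‖ ≤ 1} dA := by
    rw [hset]
    exact hfc.continuousOn.integrableOn_compact (isCompact_closedBall _ _)
  have hfnn : ∀ w : ℂ, 0 ≤ f w := fun w => by positivity
  have hAsub : A ⊆ {w : ℂ | ‖w‖ ≤ 1} := by
    intro w hw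
    have h1 : ‖w‖ ≤ R := mem_closedBall_zero_iff.mp hw.1
    have hR1 : R ≤ 1 := by
      rw [hRdef]
      calc Real.sqrt (τ + δ) ≤ Real.sqrt 1 := Real.sqrt_le_sqrt hδ1
        _ = 1 := Real.sqrt_one
    exact Set.mem_setOf.mpr (h1.trans hR1)
  have hmeasA : dA A = ENNReal.ofReal δ := by
    rw [hA, dA_annulus r R hr0 hrR, hr2, hR2]
    congr 1; ring
  have hAne : dA A ≠ ⊤ := by rw [hmeasA]; exact ENNReal.ofReal_ne_top
  have hintA : IntegrableOn f A dA := hint.mono_set hAsub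
  have hbound : ∀ w ∈ A, τ ^ j * Real.exp (-(n : ℝ) * (τ + δ)) ≤ f w := by
    intro w hw
    have h1 : ‖w‖ ≤ R := mem_closedBall_zero_iff.mp hw.1
    have h2 : r ≤ ‖w‖ := not_lt.mp (fun h => hw.2 (mem_ball_zero_iff.mpr h))
    have hw2 : τ ≤ ‖w‖ ^ 2 := by
      rw [← hr2]; exact pow_le_pow_left₀ hr0 h2 2
    have hw2' : ‖w‖ ^ 2 ≤ τ + δ := by
      rw [← hR2]; exact pow_le_pow_left₀ (norm_nonneg _) h1 2
    have e1 : τ ^ j ≤ ‖w‖ ^ (2 * j) := by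
      rw [pow_mul]
      exact pow_le_pow_left₀ hτ0 hw2 j
    have e2 : Real.exp (-(n : ℝ) * (τ + δ)) ≤ Real.exp (-(n : ℝ) * ‖w‖ ^ 2) := by
      apply Real.exp_le_exp.mpr
      have hn0 : (0 : ℝ) ≤ n := Nat.cast_nonneg n
      nlinarith
    exact mul_le_mul e1 e2 (Real.exp_pos _).le (by positivity)
  have hmeasurableA : MeasurableSet A :=
    measurableSet_closedBall.diff measurableSet_ball
  have step1 : τ ^ j * Real.exp (-(n : ℝ) * (τ + δ)) * (dA A).toReal ≤ ∫ w in A, f w ∂dA :=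
    setIntegral_ge_of_const_le_real hmeasurableA hAne hbound hintA
  have step2 : (∫ w in A, f w ∂dA) ≤ cJN j n := by
    rw [cJN]
    exact setIntegral_mono_set hint (Filter.Eventually.of_forall hfnn)
      (HasSubset.Subset.eventuallyLE hAsub)
  have htr : (dA A).toReal = δ := by rw [hmeasA, ENNReal.toReal_ofReal hδ0.le]
  rw [htr] at step1
  exact step1.trans step2

/-- Exterior decay of weighted orthonormal monomials (Ginibre case): for `τ₀ n ≤ j ≤ n − a√n`
and `√τ ≤ |ζ| ≤ 1` with `τ = j/n`,
`|ζ|^{2j} e^{−n|ζ|²}/c_{j,n} ≤ C n e^{−n(|ζ|² − τ − τ log(|ζ|²/τ))}`. -/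
theorem exterior_decay_weighted_monomials (τ₀ a : ℝ) (hτ₀0 : 0 < τ₀) (hτ₀1 : τ₀ < 1)
    (ha : 0 < a) :
    ∃ C > (0 : ℝ), ∀ n : ℕ, 1 ≤ n → ∀ j : ℕ,
      τ₀ * n ≤ (j : ℝ) → (j : ℝ) ≤ (n : ℝ) - a * Real.sqrt n →
      ∀ ζ : ℂ, Real.sqrt ((j : ℝ) / n) ≤ ‖ζ‖ → ‖ζ‖ ≤ 1 →
      ‖ζ‖ ^ (2 * j) * Real.exp (-(n : ℝ) * ‖ζ‖ ^ 2) / cJN j n ≤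
        C * n * Real.exp (-(n : ℝ) * (‖ζ‖ ^ 2 - (j : ℝ) / n -
          ((j : ℝ) / n) * Real.log (‖ζ‖ ^ 2 / ((j : ℝ) / n)))) := by
  refine ⟨Real.exp 1 / min 1 a, by positivity, ?_⟩
  intro n hn j hjlo hjhi ζ hζlo hζhi
  have hn0 : (0 : ℝ) < n := by exact_mod_cast hn
  have hsn : (0 : ℝ) < Real.sqrt n := Real.sqrt_pos.mpr hn0
  have hjpos : (0 : ℝ) < j := lt_of_lt_of_le (by positivity) hjlo
  set τ : ℝ := (j : ℝ) / n with hτdef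
  have hτpos : 0 < τ := by rw [hτdef]; positivity
  clear_value τ
  set δ : ℝ := min (1 / n) (a / Real.sqrt n) with hδdef
  have hδ0 : 0 < δ := lt_min (by positivity) (by positivity)
  have hsq : Real.sqrt n * Real.sqrt n = (n : ℝ) := Real.mul_self_sqrt hn0.le
  have hτup : τ ≤ 1 - a / Real.sqrt n := by
    rw [hτdef, div_le_iff₀ hn0]
    have : a / Real.sqrt n * n = a * Real.sqrt n := by
      field_simp
      nlinarith
    rw [sub_mul, one_mul, this]
    exact hjhi
  have hδ1 : τ + δ ≤ 1 := by
    have : δ ≤ a / Real.sqrt n := min_le_right _ _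
    linarith
  have hc := cJN_ge n j hn δ hδ0 (by rw [← hτdef]; exact hδ1)
  rw [← hτdef] at hc
  have hnτ : (n : ℝ) * τ = j := by rw [hτdef]; field_simp
  have h1s : 1 ≤ Real.sqrt n := by
    rw [show (1 : ℝ) = Real.sqrt 1 from Real.sqrt_one.symm]
    exact Real.sqrt_le_sqrt (by exact_mod_cast hn)
  have hδlow : min 1 a / n ≤ δ := by
    apply le_min
    · apply div_le_div₀ (zero_le_one) (min_le_left 1 a) hn0 le_rfl
    · exact div_le_div₀ ha.le (min_le_right 1 a) hsn (by nlinarith [hsq, h1s])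
  have hδup : (n : ℝ) * δ ≤ 1 := by
    have : δ ≤ 1 / n := min_le_left _ _
    calc (n : ℝ) * δ ≤ (n : ℝ) * (1 / n) := by nlinarith
      _ = 1 := by field_simp
  -- lower bound for cJN
  set m : ℝ := τ ^ j * Real.exp (-(j : ℝ)) * Real.exp (-1) * (min 1 a) / n with hm
  have hm0 : 0 < m := by
    have : 0 < min 1 a := lt_min one_pos ha
    positivity
  have hmc : m ≤ cJN j n := by
    refine le_trans ?_ hc
    have hexp : Real.exp (-(n : ℝ) * (τ + δ)) = Real.exp (-(j : ℝ)) * Real.exp (-((n : ℝ) * δ)) := by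
      rw [← Real.exp_add]
      congr 1
      rw [← hnτ]; ring
    rw [hexp, hm]
    have h1 : Real.exp (-1) ≤ Real.exp (-((n : ℝ) * δ)) := by
      apply Real.exp_le_exp.mpr; linarith
    calc τ ^ j * Real.exp (-(j : ℝ)) * Real.exp (-1) * min 1 a / n
        = τ ^ j * (Real.exp (-(j : ℝ)) * Real.exp (-1)) * (min 1 a / n) := by ring
      _ ≤ τ ^ j * (Real.exp (-(j : ℝ)) * Real.exp (-((n : ℝ) * δ))) * δ := by
          apply mul_le_mul
          · apply mul_le_mul_of_nonneg_left ?_ (by positivity)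
            exact mul_le_mul_of_nonneg_left h1 (Real.exp_pos _).le
          · exact hδlow
          · positivity
          · positivity
      _ = τ ^ j * (Real.exp (-(j : ℝ)) * Real.exp (-((n : ℝ) * δ))) * δ := rfl
  have hcpos : 0 < cJN j n := hm0.trans_le hmc
  -- rewrite the RHS exponential
  set t : ℝ := ‖ζ‖ ^ 2 with htdef
  clear_value t
  have hτt : τ ≤ t := by
    rw [htdef]
    have := pow_le_pow_left₀ (Real.sqrt_nonneg τ) hζlo 2
    rwa [Real.sq_sqrt hτpos.le] at this
  have htpos : 0 < t := hτpos.trans_le hτt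
  have hexpR : Real.exp (-(n : ℝ) * (t - τ - τ * Real.log (t / τ))) =
      Real.exp (-(n : ℝ) * t) * Real.exp (j : ℝ) * (t / τ) ^ j := by
    have harg : -(n : ℝ) * (t - τ - τ * Real.log (t / τ)) =
        (-(n : ℝ) * t) + (j : ℝ) + (j : ℝ) * Real.log (t / τ) := by
      have : -(n : ℝ) * (t - τ - τ * Real.log (t / τ)) =
          (-(n : ℝ) * t) + ((n : ℝ) * τ) + ((n : ℝ) * τ) * Real.log (t / τ) := by ring
      rw [this, hnτ]
    rw [harg, Real.exp_add, Real.exp_add, Real.exp_nat_mul,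
      Real.exp_log (by positivity)]
  rw [hexpR]
  have h2j : ‖ζ‖ ^ (2 * j) = t ^ j := by rw [htdef, ← pow_mul]
  rw [h2j]
  -- main estimate
  have key : t ^ j * Real.exp (-(n : ℝ) * t) / cJN j n ≤ t ^ j * Real.exp (-(n : ℝ) * t) / m := by
    apply div_le_div_of_nonneg_left (by positivity) hm0 hmc
  refine key.trans ?_
  have hmin : 0 < min 1 a := lt_min one_pos ha
  rw [hm]
  apply le_of_eq
  rw [div_pow, Real.exp_neg (j : ℝ), Real.exp_neg 1]
  have hτj : (0 : ℝ) < τ ^ j := by positivity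
  field_simp
end
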